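/- Every homogeneous polynomial p(z1,z2) of degree 9 satisfying z2 * ∂²p/∂z1² + z1 * ∂²p/∂z2² = 0 is a scalar multiple of (z1 - z2)(z1^2 + z1*z2 + z2^2)(z1^6 - 11*z1^3*z2^3 + z2^6). -/

import Mathlib

open MvPolynomial

noncomputable def Dm (i j : ℕ) : Fin 2 →₀ ℕ := Finsupp.single 0 i + Finsupp.single 1 j

lemma Dm_apply0 (i j : ℕ) : Dm i j 0 = i := by simp [Dm]
lemma Dm_apply1 (i j : ℕ) : Dm i j 1 = j := by simp [Dm, Finsupp.single_apply]

lemma fin2_eq_Dm (d : Fin 2 →₀ ℕ) : d = Dm (d 0) (d 1) := by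
  ext i
  fin_cases i
  · simp [Dm_apply0]
  · simp [Dm_apply1]

lemma Dm_eq_iff {i j k l : ℕ} : Dm i j = Dm k l ↔ i = k ∧ j = l := by
  constructor
  · intro h
    constructor
    · have := congrArg (fun f => f 0) h; simpa [Dm_apply0] using this
    · have := congrArg (fun f => f 1) h; simpa [Dm_apply1] using this
  · rintro ⟨rfl, rfl⟩; rfl

lemma Dm_add0 (i j : ℕ) : Dm i j + Finsupp.single 0 1 = Dm (i+1) j := by
  ext t; fin_cases t <;> simp [Dm, Finsupp.single_apply]

lemma Dm_add1 (i j : ℕ) : Dm i j + Finsupp.single 1 1 = Dm i (j+1) := by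
  ext t; fin_cases t <;> simp [Dm, Finsupp.single_apply]

lemma Dm_sub0 (i j : ℕ) : Dm (i+1) j - Finsupp.single 0 1 = Dm i j := by
  ext t; fin_cases t <;> simp [Dm, Finsupp.single_apply]

lemma Dm_sub1 (i j : ℕ) : Dm i (j+1) - Finsupp.single 1 1 = Dm i j := by
  ext t; fin_cases t <;> simp [Dm, Finsupp.single_apply]

lemma Dm_degree (i j : ℕ) : (Dm i j).degree = i + j := by
  rw [Finsupp.degree_apply,
    Finset.sum_subset (Finset.subset_univ _)
      (fun x _ hx => Finsupp.notMem_support_iff.mp hx),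
    Fin.sum_univ_two, Dm_apply0, Dm_apply1]

lemma coeff_pderiv (i : Fin 2) (d : Fin 2 →₀ ℕ) (p : MvPolynomial (Fin 2) ℝ) :
    coeff d (pderiv i p) = (d i + 1) * coeff (d + Finsupp.single i 1) p := by
  induction p using MvPolynomial.induction_on' with
  | add p q hp hq => simp [hp, hq, mul_add]
  | monomial s a =>
    rw [pderiv_monomial, coeff_monomial, coeff_monomial]
    by_cases h : s = d + Finsupp.single i 1
    · subst h
      simp [Finsupp.add_apply, Finsupp.single_apply, mul_comm]
    · rw [if_neg h]
      by_cases h2 : s - Finsupp.single i 1 = d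
      · have hsi : s i = 0 := by
          by_contra hne
          apply h
          rw [← h2]
          ext t
          by_cases ht : t = i
          · subst ht
            simp [Finsupp.single_apply]
            omega
          · simp [Finsupp.single_apply, ht, Ne.symm ht]
        simp [h2, hsi]
      · simp [h2]

lemma key (p : MvPolynomial (Fin 2) ℝ)
    (hker : X 1 * pderiv 0 (pderiv 0 p) + X 0 * pderiv 1 (pderiv 1 p) = 0)
    (i j : ℕ) :
    ((i:ℝ)+2)*((i:ℝ)+3)*coeff (Dm (i+3) j) p
      + ((j:ℝ)+2)*((j:ℝ)+3)*coeff (Dm i (j+3)) p = 0 := by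
  have h := congrArg (coeff (Dm (i+1) (j+1))) hker
  rw [coeff_zero, coeff_add, coeff_X_mul', coeff_X_mul',
    if_pos (by simp [Finsupp.mem_support_iff, Dm_apply1]),
    if_pos (by simp [Finsupp.mem_support_iff, Dm_apply0]),
    Dm_sub1, Dm_sub0, coeff_pderiv, coeff_pderiv, coeff_pderiv, coeff_pderiv,
    Dm_apply0, Dm_add0, Dm_apply0, Dm_add0, Dm_apply1, Dm_add1, Dm_apply1, Dm_add1] at h
  have e1 : i + 1 + 1 + 1 = i + 3 := by omega
  have e2 : j + 1 + 1 + 1 = j + 3 := by omega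
  rw [e1, e2] at h
  push_cast at h ⊢
  linarith [h]

lemma key0 (p : MvPolynomial (Fin 2) ℝ)
    (hker : X 1 * pderiv 0 (pderiv 0 p) + X 0 * pderiv 1 (pderiv 1 p) = 0) :
    coeff (Dm 2 7) p = 0 := by
  have h := congrArg (coeff (Dm 0 8)) hker
  rw [coeff_zero, coeff_add, coeff_X_mul', coeff_X_mul',
    if_pos (by simp [Finsupp.mem_support_iff, Dm_apply1]),
    if_neg (by simp [Finsupp.mem_support_iff, Dm_apply0]),
    show (8:ℕ) = 7 + 1 from rfl, Dm_sub1, coeff_pderiv, coeff_pderiv,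
    Dm_apply0, Dm_add0, Dm_apply0, Dm_add0] at h
  norm_num at h
  linarith [h]

lemma key8 (p : MvPolynomial (Fin 2) ℝ)
    (hker : X 1 * pderiv 0 (pderiv 0 p) + X 0 * pderiv 1 (pderiv 1 p) = 0) :
    coeff (Dm 7 2) p = 0 := by
  have h := congrArg (coeff (Dm 8 0)) hker
  rw [coeff_zero, coeff_add, coeff_X_mul', coeff_X_mul',
    if_neg (by simp [Finsupp.mem_support_iff, Dm_apply1]),
    if_pos (by simp [Finsupp.mem_support_iff, Dm_apply0]),
    show (8:ℕ) = 7 + 1 from rfl, Dm_sub0, coeff_pderiv, coeff_pderiv,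
    Dm_apply1, Dm_add1, Dm_apply1, Dm_add1] at h
  norm_num at h
  linarith [h]

lemma monomial_Dm (a b : ℕ) (c : ℝ) :
    (monomial (Dm a b) c : MvPolynomial (Fin 2) ℝ) = C c * X 0 ^ a * X 1 ^ b := by
  simp [Dm, X_pow_eq_monomial, monomial_mul, C_mul_monomial]

lemma Q_eq : ((X 0 - X 1) * (X 0 ^ 2 + X 0 * X 1 + X 1 ^ 2)
        * (X 0 ^ 6 - 11 * X 0 ^ 3 * X 1 ^ 3 + X 1 ^ 6) : MvPolynomial (Fin 2) ℝ)
    = monomial (Dm 9 0) 1 + monomial (Dm 6 3) (-12)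
      + monomial (Dm 3 6) 12 + monomial (Dm 0 9) (-1) := by
  rw [monomial_Dm, monomial_Dm, monomial_Dm, monomial_Dm]
  simp only [map_one, map_neg, map_ofNat]
  ring

theorem stmt2 (p : MvPolynomial (Fin 2) ℝ)
    (hhom : p.IsHomogeneous 9)
    (hker : X 1 * pderiv 0 (pderiv 0 p) + X 0 * pderiv 1 (pderiv 1 p) = 0) :
    ∃ c : ℝ,
      p = c • ((X 0 - X 1) * (X 0 ^ 2 + X 0 * X 1 + X 1 ^ 2)
        * (X 0 ^ 6 - 11 * X 0 ^ 3 * X 1 ^ 3 + X 1 ^ 6)) := by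
  have h2 : coeff (Dm 2 7) p = 0 := key0 p hker
  have h7 : coeff (Dm 7 2) p = 0 := key8 p hker
  have hk0 := key p hker 0 6
  have hk1 := key p hker 1 5
  have hk2 := key p hker 2 4
  have hk3 := key p hker 3 3
  have hk4 := key p hker 4 2
  have hk5 := key p hker 5 1
  have hk6 := key p hker 6 0
  norm_num at hk0 hk1 hk2 hk3 hk4 hk5 hk6
  refine ⟨coeff (Dm 9 0) p, ?_⟩
  ext d
  obtain ⟨i, j, rfl⟩ : ∃ i j, d = Dm i j := ⟨d 0, d 1, fin2_eq_Dm d⟩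
  rw [coeff_smul, Q_eq]
  by_cases hij : i + j = 9
  · obtain rfl : j = 9 - i := by omega
    have hile : i ≤ 9 := by omega
    interval_cases i <;>
      simp only [coeff_add, coeff_monomial, Dm_eq_iff, smul_eq_mul] <;>
      norm_num <;>
      linarith
  · have hp0 : coeff (Dm i j) p = 0 :=
      hhom.coeff_eq_zero (by rw [Dm_degree]; exact hij)
    rw [hp0]
    simp only [coeff_add, coeff_monomial, Dm_eq_iff, smul_eq_mul]
    have c1 : ¬(9 = i ∧ 0 = j) := by omega
    have c2 : ¬(6 = i ∧ 3 = j) := by omega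
    have c3 : ¬(3 = i ∧ 6 = j) := by omega
    have c4 : ¬(0 = i ∧ 9 = j) := by omega
    rw [if_neg c1, if_neg c2, if_neg c3, if_neg c4]
    ring
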